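/- Equip the space of flows 𝔽 with the cylindrical σ-field A. Then the shift map θ : ℝ × 𝔽 → 𝔽, θ(h,f) = θ_h f where (θ_h f)(s,x;t) = f(s+h, x; t+h), is jointly measurable (with respect to B(ℝ) ⊗ A and A), and the evaluation map φ : [0,∞) × 𝔽 × ℝ → ℝ, φ(t,f,x) = f(0,x;t), is jointly measurable in all its arguments. -/

import Mathlib

/-- The range of the flow `f` at time `s`. -/
def rangeAt (f : ℝ → ℝ → ℝ → ℝ) (s : ℝ) : Set ℝ :=
  {y | ∃ r x : ℝ, r < s ∧ f r x s = y}

/-- `f` belongs to the space of flows 𝔽. -/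
def IsFlow (f : ℝ → ℝ → ℝ → ℝ) : Prop :=
  (∀ s x : ℝ, f s x s = x) ∧
  (∀ s x : ℝ, ContinuousOn (fun t => f s x t) (Set.Ici s)) ∧
  (∀ r s t x : ℝ, r ≤ s → s ≤ t → f s (f r x s) t = f r x t) ∧
  (∀ s : ℝ, Dense (rangeAt f s)) ∧
  (∀ s t : ℝ, s ≤ t → ∀ x ∉ rangeAt f s,
    ContinuousWithinAt (fun y => f s y t) (Set.Ici x) x) ∧
  (∀ s t x : ℝ, s < t → ∃ r y : ℝ, r < t ∧ y ∉ rangeAt f r ∧ f s x t = f r y t)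

/-- The space of flows 𝔽. -/
abbrev FlowSpace := {f : ℝ → ℝ → ℝ → ℝ // IsFlow f}

/-- The cylindrical σ-field 𝒜 on 𝔽. -/
instance : MeasurableSpace FlowSpace :=
  ⨆ (s : ℝ) (x : ℝ) (t : ℝ) (_ : s ≤ t),
    MeasurableSpace.comap (fun f : FlowSpace => f.1 s x t) inferInstance

/-- The shift `θ_h`: `(θ_h f)(s,x;t) = f(s+h, x; t+h)`. -/
def shift (h : ℝ) (f : ℝ → ℝ → ℝ → ℝ) : ℝ → ℝ → ℝ → ℝ :=
  fun s x t => f (s + h) x (t + h)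

namespace FlowAux

open Set Filter MeasurableSpace

variable {f : ℝ → ℝ → ℝ → ℝ}

/-- (F1) composition. -/
lemma comp_eq (hf : IsFlow f) {r s t : ℝ} (x : ℝ) (h1 : r ≤ s) (h2 : s ≤ t) :
    f s (f r x s) t = f r x t := hf.2.2.1 r s t x h1 h2

/-- Monotonicity of `x ↦ f s x u`, derived from coalescence + IVT. -/
lemma mono (hf : IsFlow f) {s u x y : ℝ} (hsu : s ≤ u) (hxy : x ≤ y) :
    f s x u ≤ f s y u := by
  by_contra h
  push_neg at h
  have hcx : ContinuousOn (fun w => f s x w) (Icc s u) :=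
    (hf.2.1 s x).mono Icc_subset_Ici_self
  have hcy : ContinuousOn (fun w => f s y w) (Icc s u) :=
    (hf.2.1 s y).mono Icc_subset_Ici_self
  have hg : ContinuousOn (fun w => f s x w - f s y w) (Icc s u) := hcx.sub hcy
  have hxs : f s x s = x := hf.1 s x
  have hys : f s y s = y := hf.1 s y
  have h0 : (0:ℝ) ∈ Icc (f s x s - f s y s) (f s x u - f s y u) := by
    constructor
    · rw [hxs, hys]; linarith
    · linarith
  obtain ⟨v, hv, hgv⟩ := intermediate_value_Icc hsu hg h0
  have hveq : f s x v = f s y v := by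
    have : f s x v - f s y v = 0 := hgv
    linarith
  have e1 : f v (f s x v) u = f s x u := hf.2.2.1 s v u x hv.1 hv.2
  have e2 : f v (f s y v) u = f s y u := hf.2.2.1 s v u y hv.1 hv.2
  rw [hveq, e2] at e1
  linarith

/-- Lower bound: any rational-pair trajectory weakly above `x` at time `s`
dominates `f s x t` at time `t`. -/
lemma lemA (hf : IsFlow f) {q s t x v : ℝ} (hqs : q ≤ s) (hst : s ≤ t)
    (hx : x ≤ f q v s) : f s x t ≤ f q v t := by
  calc f s x t ≤ f s (f q v s) t := mono hf hst hx
  _ = f q v t := comp_eq hf v hqs hst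

/-- Sandwich: rational-pair positions at time `s` are dense from above. -/
lemma sandwich (hf : IsFlow f) (s x' : ℝ) {ε : ℝ} (hε : 0 < ε) :
    ∃ q v : ℚ, (q:ℝ) < s ∧ x' < f q v s ∧ f q v s < x' + ε := by
  have hd : Dense (rangeAt f s) := hf.2.2.2.1 s
  obtain ⟨p₁, hp₁R, hp₁⟩ := hd.exists_between (show x' < x' + ε by linarith)
  obtain ⟨p₂, hp₂R, hp₂⟩ := hd.exists_between (show p₁ < x' + ε from hp₁.2)
  obtain ⟨a, b, has, hab⟩ := hp₁R
  obtain ⟨a', b', has', hab'⟩ := hp₂R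
  obtain ⟨q, hq1, hq2⟩ := exists_rat_btwn (show max a a' < s from max_lt has has')
  have haq : a ≤ (q:ℝ) := le_of_lt (lt_of_le_of_lt (le_max_left _ _) hq1)
  have haq' : a' ≤ (q:ℝ) := le_of_lt (lt_of_le_of_lt (le_max_right _ _) hq1)
  have hqs : (q:ℝ) ≤ s := le_of_lt hq2
  have e1 : f q (f a b q) s = p₁ := (comp_eq hf b haq hqs).trans hab
  have e2 : f q (f a' b' q) s = p₂ := (comp_eq hf b' haq' hqs).trans hab'
  have hcc : f a b q < f a' b' q := by
    by_contra hcon; push_neg at hcon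
    have := mono hf hqs hcon
    rw [e1, e2] at this
    linarith [hp₂.1]
  obtain ⟨v, hv1, hv2⟩ := exists_rat_btwn hcc
  refine ⟨q, v, hq2, ?_, ?_⟩
  · have := mono hf hqs (le_of_lt hv1)
    rw [e1] at this
    linarith [hp₁.1]
  · have := mono hf hqs (le_of_lt hv2)
    rw [e2] at this
    linarith [hp₂.2]

/-- Key approximation: the value `f s x t` is the infimum of values of
rational-pair trajectories starting strictly before `s` and lying weakly
above `x` at time `s`. -/
lemma lemB (hf : IsFlow f) {s t x c : ℝ} (hst : s ≤ t) (hc : f s x t < c) :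
    ∃ q v : ℚ, (q:ℝ) < s ∧ x ≤ f q v s ∧ f q v t < c := by
  by_cases hA : ∃ ε > (0:ℝ), ∀ y, x < y → y < x + ε → f s y t < c
  · obtain ⟨ε, hε, hAc⟩ := hA
    obtain ⟨q, v, hq, h1, h2⟩ := sandwich hf s x hε
    refine ⟨q, v, hq, le_of_lt h1, ?_⟩
    have hcomp := comp_eq hf (r := (q:ℝ)) (v:ℝ) (le_of_lt hq) hst
    rw [← hcomp]
    exact hAc _ h1 h2
  · push_neg at hA
    have hxR : x ∈ rangeAt f s := by
      by_contra hx
      have hrc := hf.2.2.2.2.1 s t hst x hx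
      have hmem : (fun y => f s y t) ⁻¹' Iio c ∈ nhdsWithin x (Ici x) :=
        hrc.preimage_mem_nhdsWithin (isOpen_Iio.mem_nhds hc)
      rw [mem_nhdsGE_iff_exists_Ico_subset] at hmem
      obtain ⟨u, hu, hsub⟩ := hmem
      obtain ⟨y, hy1, hy2, hy3⟩ := hA (u - x) (by simp only [sub_pos]; exact hu)
      have : f s y t < c := hsub ⟨le_of_lt hy1, by linarith⟩
      linarith
    obtain ⟨r₀, x₀, hr₀, hx₀⟩ := hxR
    obtain ⟨rb, y₀, hrb, hy₀R, hrep⟩ := hf.2.2.2.2.2 r₀ s x₀ hr₀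
    have hxy : f rb y₀ s = x := by rw [← hrep, hx₀]
    have hrbs : rb ≤ s := le_of_lt hrb
    have hrbt : rb ≤ t := le_trans hrbs hst
    have hFx : f rb y₀ t = f s x t := by rw [← comp_eq hf (r := rb) y₀ hrbs hst, hxy]
    have hvt : f rb y₀ t < c := by rw [hFx]; exact hc
    have hrc := hf.2.2.2.2.1 rb t hrbt y₀ hy₀R
    have hmem : (fun z => f rb z t) ⁻¹' Iio c ∈ nhdsWithin y₀ (Ici y₀) :=
      hrc.preimage_mem_nhdsWithin (isOpen_Iio.mem_nhds hvt)
    rw [mem_nhdsGE_iff_exists_Ico_subset] at hmem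
    obtain ⟨u₁, hu₁, hsub⟩ := hmem
    by_cases hB1 : ∃ ζ : ℚ, y₀ < (ζ:ℝ) ∧ (ζ:ℝ) < u₁ ∧ x < f rb ζ s
    · obtain ⟨ζ, hζ1, hζ2, hζx⟩ := hB1
      obtain ⟨q, hq1, hq2⟩ := exists_rat_btwn hrb
      have hrbq : rb ≤ (q:ℝ) := le_of_lt hq1
      have hqs : (q:ℝ) ≤ s := le_of_lt hq2
      have hqt : (q:ℝ) ≤ t := le_trans hqs hst
      have ew : f q (f rb y₀ q) s = x := (comp_eq hf y₀ hrbq hqs).trans hxy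
      have ew' : f q (f rb ζ q) s = f rb ζ s := comp_eq hf (ζ:ℝ) hrbq hqs
      have ewt' : f q (f rb ζ q) t = f rb ζ t := comp_eq hf (ζ:ℝ) hrbq hqt
      have hww : f rb y₀ q < f rb (ζ:ℝ) q := by
        by_contra hcon; push_neg at hcon
        have := mono hf hqs hcon
        rw [ew, ew'] at this
        linarith
      obtain ⟨v, hv1, hv2⟩ := exists_rat_btwn hww
      refine ⟨q, v, hq2, ?_, ?_⟩
      · have := mono hf hqs (le_of_lt hv1)
        rw [ew] at this
        exact this
      · have h1 := mono hf hqt (le_of_lt hv2)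
        rw [ewt'] at h1
        have h2 : f rb (ζ:ℝ) t < c := hsub ⟨le_of_lt hζ1, hζ2⟩
        linarith
    · push_neg at hB1
      obtain ⟨ζ', hζ'1, hζ'2⟩ := exists_rat_btwn (Set.mem_Ioi.mp hu₁)
      obtain ⟨ζ, hζ1, hζ2⟩ := exists_rat_btwn (show (ζ':ℝ) < u₁ from hζ'2)
      have hζ'ge : x ≤ f rb (ζ':ℝ) s := by
        have := mono hf hrbs (le_of_lt hζ'1)
        rw [hxy] at this
        exact this
      have hζge : x ≤ f rb (ζ:ℝ) s := by
        have := mono hf hrbs (le_of_lt (lt_trans hζ'1 hζ1))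
        rw [hxy] at this
        exact this
      have hζ'eq : f rb (ζ':ℝ) s = x := le_antisymm (hB1 ζ' hζ'1 hζ'2) hζ'ge
      have hζeq : f rb (ζ:ℝ) s = x := le_antisymm (hB1 ζ (lt_trans hζ'1 hζ1) hζ2) hζge
      by_cases hB2a : ∃ q : ℚ, rb < (q:ℝ) ∧ (q:ℝ) < s ∧ f rb (ζ':ℝ) q < f rb (ζ:ℝ) q
      · obtain ⟨q, hq1, hq2, hqlt⟩ := hB2a
        have hrbq : rb ≤ (q:ℝ) := le_of_lt hq1
        have hqs : (q:ℝ) ≤ s := le_of_lt hq2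
        obtain ⟨v, hv1, hv2⟩ := exists_rat_btwn hqlt
        have e1 : f q (f rb (ζ':ℝ) q) s = x := (comp_eq hf (ζ':ℝ) hrbq hqs).trans hζ'eq
        have e2 : f q (f rb (ζ:ℝ) q) s = x := (comp_eq hf (ζ:ℝ) hrbq hqs).trans hζeq
        have hle : f q v s ≤ x := by
          have := mono hf hqs (le_of_lt hv2)
          rw [e2] at this
          exact this
        have hge : x ≤ f q v s := by
          have := mono hf hqs (le_of_lt hv1)
          rw [e1] at this
          exact this
        have heq : f q v s = x := le_antisymm hle hge
        refine ⟨q, v, hq2, le_of_eq heq.symm, ?_⟩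
        have hcomp := comp_eq hf (r := (q:ℝ)) (v:ℝ) hqs hst
        rw [← hcomp, heq]
        exact hc
      · exfalso
        push_neg at hB2a
        have hQeq : ∀ q : ℚ, rb < (q:ℝ) → (q:ℝ) < s → f rb (ζ:ℝ) q = f rb (ζ':ℝ) q := by
          intro q h1 h2
          refine le_antisymm (hB2a q h1 h2) ?_
          exact mono hf (le_of_lt h1) (le_of_lt (by exact_mod_cast hζ1))
        set Qs : Set ℝ := {w | (∃ q : ℚ, (q:ℝ) = w) ∧ rb < w ∧ w < s} with hQs
        have hQsub : Qs ⊆ Ici rb := fun w hw => le_of_lt hw.2.1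
        have hcl : rb ∈ closure Qs := by
          rw [Metric.mem_closure_iff]
          intro ε hε
          obtain ⟨q, hq1, hq2⟩ := exists_rat_btwn (show rb < min s (rb + ε) by
            apply lt_min hrb; linarith)
          refine ⟨q, ⟨⟨q, rfl⟩, hq1, lt_of_lt_of_le hq2 (min_le_left _ _)⟩, ?_⟩
          have h3 : (q:ℝ) < rb + ε := lt_of_lt_of_le hq2 (min_le_right _ _)
          rw [Real.dist_eq, abs_sub_lt_iff]
          constructor <;> linarith
        haveI hne : (nhdsWithin rb Qs).NeBot := mem_closure_iff_nhdsWithin_neBot.mp hcl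
        have hT1 : Tendsto (fun w => f rb (ζ':ℝ) w) (nhdsWithin rb Qs) (nhds (ζ':ℝ)) := by
          have hcw : ContinuousWithinAt (fun w => f rb (ζ':ℝ) w) (Ici rb) rb :=
            (hf.2.1 rb (ζ':ℝ)).continuousWithinAt self_mem_Ici
          have h0 : f rb (ζ':ℝ) rb = (ζ':ℝ) := hf.1 rb (ζ':ℝ)
          have := hcw.mono hQsub
          rw [ContinuousWithinAt, h0] at this
          exact this
        have hT2 : Tendsto (fun w => f rb (ζ:ℝ) w) (nhdsWithin rb Qs) (nhds (ζ:ℝ)) := by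
          have hcw : ContinuousWithinAt (fun w => f rb (ζ:ℝ) w) (Ici rb) rb :=
            (hf.2.1 rb (ζ:ℝ)).continuousWithinAt self_mem_Ici
          have h0 : f rb (ζ:ℝ) rb = (ζ:ℝ) := hf.1 rb (ζ:ℝ)
          have := hcw.mono hQsub
          rw [ContinuousWithinAt, h0] at this
          exact this
        have hagree : (fun w => f rb (ζ:ℝ) w) =ᶠ[nhdsWithin rb Qs]
            (fun w => f rb (ζ':ℝ) w) := by
          filter_upwards [self_mem_nhdsWithin] with w hw
          obtain ⟨⟨q, hq⟩, h1, h2⟩ := hw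
          rw [← hq] at h1 h2 ⊢
          exact hQeq q h1 h2
        have := tendsto_nhds_unique (hT2.congr' hagree) hT1
        have : (ζ:ℝ) = (ζ':ℝ) := this
        have hlt : (ζ':ℝ) < (ζ:ℝ) := hζ1
        linarith

/-- Each fixed evaluation is measurable for the cylindrical σ-field. -/
lemma meas_eval {a b : ℝ} (hab : a ≤ b) (v : ℝ) :
    Measurable fun g : FlowSpace => g.1 a v b := by
  rw [measurable_iff_comap_le]
  exact le_iSup_of_le a <| le_iSup_of_le v <| le_iSup_of_le b <|
    le_iSup_of_le hab le_rfl

/-- Main measurability lemma: evaluation of a measurably-varying flow at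
measurably-varying space-time points is measurable. -/
lemma mainC {Ω : Type*} [MeasurableSpace Ω] {S T X : Ω → ℝ} {Φ : Ω → FlowSpace}
    (hS : Measurable S) (hT : Measurable T) (hX : Measurable X) (hΦ : Measurable Φ)
    (hST : ∀ ω, S ω ≤ T ω) :
    Measurable fun ω => (Φ ω).1 (S ω) (X ω) (T ω) := by
  have hE : ∀ (q v : ℚ) (U : Ω → ℝ), Measurable U →
      Measurable fun ω => (Φ ω).1 q v (max (U ω) q) := by
    intro q v U hU
    have huncurry : Measurable (Function.uncurry fun (tt : ℝ) (g : FlowSpace) =>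
        g.1 q v (max tt q)) := by
      apply MeasureTheory.measurable_uncurry_of_continuous_of_measurable
      · intro g
        exact (g.2.2.1 (q:ℝ) (v:ℝ)).comp_continuous
          (continuous_id.max continuous_const) (fun tt => Set.mem_Ici.mpr (le_max_right _ _))
      · intro tt
        exact meas_eval (le_max_right _ _) (v:ℝ)
    exact huncurry.comp (hU.prodMk hΦ)
  apply measurable_of_Iio
  intro cc
  have hset : (fun ω => (Φ ω).1 (S ω) (X ω) (T ω)) ⁻¹' Iio cc =
      ⋃ (p : ℚ × ℚ), {ω | ((p.1:ℝ) < S ω ∧ X ω ≤ (Φ ω).1 p.1 p.2 (max (S ω) p.1)) ∧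
        (Φ ω).1 p.1 p.2 (max (T ω) p.1) < cc} := by
    ext ω
    simp only [mem_preimage, mem_Iio, mem_iUnion, mem_setOf_eq]
    constructor
    · intro h
      obtain ⟨q, v, hq, h1, h2⟩ := lemB (Φ ω).2 (hST ω) h
      refine ⟨⟨q, v⟩, ⟨hq, ?_⟩, ?_⟩
      · rw [max_eq_left (le_of_lt hq)]; exact h1
      · rw [max_eq_left (le_trans (le_of_lt hq) (hST ω))]; exact h2
    · rintro ⟨⟨q, v⟩, ⟨hq, h1⟩, h2⟩
      rw [max_eq_left (le_of_lt hq)] at h1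
      rw [max_eq_left (le_trans (le_of_lt hq) (hST ω))] at h2
      exact lt_of_le_of_lt (lemA (Φ ω).2 (le_of_lt hq) (hST ω) h1) h2
  rw [hset]
  apply MeasurableSet.iUnion
  rintro ⟨q, v⟩
  apply MeasurableSet.inter
  · apply MeasurableSet.inter
    · exact measurableSet_lt measurable_const hS
    · exact measurableSet_le hX (hE q v S hS)
  · exact (hE q v T hT) measurableSet_Iio

end FlowAux

/-- the shift map `θ : ℝ × 𝔽 → 𝔽` (any map realizing
`(h,f) ↦ θ_h f` in 𝔽) is jointly measurable, and the evaluation map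
`φ : [0,∞) × 𝔽 × ℝ → ℝ`, `φ(t,f,x) = f(0,x;t)`, is jointly measurable. -/
theorem measurable_shift_and_phi (Θ : ℝ × FlowSpace → FlowSpace)
    (hΘ : ∀ q : ℝ × FlowSpace, ((Θ q : FlowSpace) : ℝ → ℝ → ℝ → ℝ) = shift q.1 q.2.1) :
    Measurable Θ ∧
    Measurable (fun q : {t : ℝ // 0 ≤ t} × FlowSpace × ℝ =>
      q.2.1.1 0 q.2.2 q.1.1) := by
  constructor
  · rw [measurable_iff_comap_le]
    have hA : instMeasurableSpaceFlowSpace =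
        ⨆ (s : ℝ) (x : ℝ) (t : ℝ) (_ : s ≤ t),
          MeasurableSpace.comap (fun f : FlowSpace => f.1 s x t) inferInstance := rfl
    rw [hA]
    simp only [MeasurableSpace.comap_iSup]
    refine iSup_le fun s => iSup_le fun x => iSup_le fun t => iSup_le fun hst => ?_
    rw [MeasurableSpace.comap_comp]
    rw [← measurable_iff_comap_le]
    have hfun : ((fun f : FlowSpace => f.1 s x t) ∘ Θ) =
        fun q : ℝ × FlowSpace => q.2.1 (s + q.1) x (t + q.1) := by
      funext q
      show (Θ q).1 s x t = q.2.1 (s + q.1) x (t + q.1)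
      rw [hΘ q]
      rfl
    rw [hfun]
    exact FlowAux.mainC (S := fun q : ℝ × FlowSpace => s + q.1)
      (T := fun q : ℝ × FlowSpace => t + q.1) (X := fun _ => x) (Φ := Prod.snd)
      (measurable_const.add measurable_fst) (measurable_const.add measurable_fst)
      measurable_const measurable_snd (fun q => add_le_add_left hst q.1)
  · exact FlowAux.mainC (S := fun _ => (0:ℝ))
      (T := fun q : {t : ℝ // 0 ≤ t} × FlowSpace × ℝ => (q.1 : ℝ))
      (X := fun q => q.2.2) (Φ := fun q => q.2.1)
      measurable_const (measurable_subtype_coe.comp measurable_fst)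
      (measurable_snd.comp measurable_snd) (measurable_fst.comp measurable_snd)
      (fun q => q.1.2)
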